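/- arXiv:1703.05289 — 4 statements merged into one kernel-verified Lean document; each statement's English description precedes it below -/
import Mathlib

section
/- Let E = [t]_× R be an essential matrix, where R ∈ SO(3) and [t]_× is the skew-symmetric matrix of cross product with t ∈ ℝ³. Then E satisfies the Demazure (trace) constraint: 2 E Eᵀ E − trace(E Eᵀ) E = 0. -/
open Matrix

/-- The skew-symmetric cross-product matrix `[t]ₓ` of `t ∈ ℝ³`. -/
def crossMat (t : Fin 3 → ℝ) : Matrix (Fin 3) (Fin 3) ℝ :=
  !![0, -t 2, t 1; t 2, 0, -t 0; -t 1, t 0, 0]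

lemma demazure_cross (t : Fin 3 → ℝ) :
    (2 : ℝ) • (crossMat t * (crossMat t)ᵀ * crossMat t)
      - (crossMat t * (crossMat t)ᵀ).trace • crossMat t = 0 := by
  ext i j
  simp only [Matrix.sub_apply, Matrix.smul_apply, Matrix.mul_apply,
    Matrix.transpose_apply, Matrix.trace, Matrix.diag, Fin.sum_univ_three,
    Matrix.zero_apply, smul_eq_mul]
  fin_cases i <;> fin_cases j <;> simp [crossMat] <;> ring

/-- Every essential matrix `E = [t]ₓ R` with `R ∈ SO(3)` satisfies the Demazure
(trace) constraint `2 E Eᵀ E − trace(E Eᵀ) E = 0`. -/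
theorem demazure_of_essential (t : Fin 3 → ℝ) (R : Matrix (Fin 3) (Fin 3) ℝ)
    (hR : R * Rᵀ = 1) (hdet : R.det = 1) (E : Matrix (Fin 3) (Fin 3) ℝ)
    (hE : E = crossMat t * R) :
    (2 : ℝ) • (E * Eᵀ * E) - (E * Eᵀ).trace • E = 0 := by
  subst hE
  have hEEt : crossMat t * R * (crossMat t * R)ᵀ = crossMat t * (crossMat t)ᵀ := by
    rw [Matrix.transpose_mul]
    calc crossMat t * R * (Rᵀ * (crossMat t)ᵀ)
        = crossMat t * (R * Rᵀ) * (crossMat t)ᵀ := by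
          simp [Matrix.mul_assoc]
      _ = crossMat t * (crossMat t)ᵀ := by rw [hR]; simp
  rw [hEEt]
  have h := demazure_cross t
  calc (2 : ℝ) • (crossMat t * (crossMat t)ᵀ * (crossMat t * R))
        - (crossMat t * (crossMat t)ᵀ).trace • (crossMat t * R)
      = ((2 : ℝ) • (crossMat t * (crossMat t)ᵀ * crossMat t)
        - (crossMat t * (crossMat t)ᵀ).trace • crossMat t) * R := by
        simp [Matrix.sub_mul, Matrix.smul_mul, Matrix.mul_assoc]
    _ = 0 := by rw [h, Matrix.zero_mul]
end

section
/- Let E be an essential matrix (E = [t]_× R with R ∈ SO(3), t ∈ ℝ³), let f ∈ ℝ with f ≠ 0, K = diag(f,f,1), and F = K⁻¹ E K⁻¹ with entries f_{ij}. Then F satisfies the quintic constraint: f₁₁f₁₃³f₃₁ + f₁₃²f₂₁f₂₃f₃₁ + f₁₁f₁₃f₂₃²f₃₁ + f₂₁f₂₃³f₃₁ − f₁₁f₁₃f₃₁³ − f₂₁f₂₃f₃₁³ + f₁₂f₁₃³f₃₂ + f₁₃²f₂₂f₂₃f₃₂ + f₁₂f₁₃f₂₃²f₃₂ + f₂₂f₂₃³f₃₂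 − f₁₂f₁₃f₃₁²f₃₂ − f₂₂f₂₃f₃₁²f₃₂ − f₁₁f₁₃f₃₁f₃₂² − f₂₁f₂₃f₃₁f₃₂² − f₁₂f₁₃f₃₂³ − f₂₂f₂₃f₃₂³ − f₁₁²f₁₃²f₃₃ − 2f₁₁f₁₃f₂₁f₂₃f₃₃ − 2f₁₂f₁₃f₂₂f₂₃f₃₃ − f₁₂²f₁₃²f₃₃ − f₂₁²f₂₃²f₃₃ − f₂₂²f₂₃²f₃₃ + f₁₁²f₃₁²f₃₃ + f₂₁²f₃₁²f₃₃ + 2f₁₁f₁₂f₃₁f₃₂f₃₃ + 2f₂₁f₂₂f₃₁f₃₂f₃₃ + f₁₂²f₃₂²f₃₃ + f₂₂²f₃₂²f₃₃ = 0. -/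
open Matrix

/-!
Write `F = [[A, a], [bᵀ, d]]` in blocks. The quintic is
`(|a|² - |b|²) aᵀAb + d (|Ab|² - |Aᵀa|²)`, which is weighted homogeneous of degree 6 when `A`
has weight 2, `a` and `b` weight 1 and `d` weight 0; hence its value at `K⁻¹EK⁻¹` is
`f⁻⁶` times its value at `E`. For the essential matrix `E = [t]ₓR` and `s = Rᵀt` one has
`EᵀE = |s|² I - s sᵀ` and `E s = 0`. These relations express `aᵀAb`, `|Aᵀa|²` and `|Ab|²`
through `s` and the last row of `E`, and the quintic then cancels identically.
-/

section Quintic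

variable {α : Type*} [CommRing α]

def fEfQuintic (F : Matrix (Fin 3) (Fin 3) α) : α :=
  F 0 0 * F 0 2 ^ 3 * F 2 0 + F 0 2 ^ 2 * F 1 0 * F 1 2 * F 2 0
      + F 0 0 * F 0 2 * F 1 2 ^ 2 * F 2 0 + F 1 0 * F 1 2 ^ 3 * F 2 0
      - F 0 0 * F 0 2 * F 2 0 ^ 3 - F 1 0 * F 1 2 * F 2 0 ^ 3
      + F 0 1 * F 0 2 ^ 3 * F 2 1 + F 0 2 ^ 2 * F 1 1 * F 1 2 * F 2 1
      + F 0 1 * F 0 2 * F 1 2 ^ 2 * F 2 1 + F 1 1 * F 1 2 ^ 3 * F 2 1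
      - F 0 1 * F 0 2 * F 2 0 ^ 2 * F 2 1 - F 1 1 * F 1 2 * F 2 0 ^ 2 * F 2 1
      - F 0 0 * F 0 2 * F 2 0 * F 2 1 ^ 2 - F 1 0 * F 1 2 * F 2 0 * F 2 1 ^ 2
      - F 0 1 * F 0 2 * F 2 1 ^ 3 - F 1 1 * F 1 2 * F 2 1 ^ 3
      - F 0 0 ^ 2 * F 0 2 ^ 2 * F 2 2
      - 2 * F 0 0 * F 0 2 * F 1 0 * F 1 2 * F 2 2
      - 2 * F 0 1 * F 0 2 * F 1 1 * F 1 2 * F 2 2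
      - F 0 1 ^ 2 * F 0 2 ^ 2 * F 2 2
      - F 1 0 ^ 2 * F 1 2 ^ 2 * F 2 2 - F 1 1 ^ 2 * F 1 2 ^ 2 * F 2 2
      + F 0 0 ^ 2 * F 2 0 ^ 2 * F 2 2 + F 1 0 ^ 2 * F 2 0 ^ 2 * F 2 2
      + 2 * F 0 0 * F 0 1 * F 2 0 * F 2 1 * F 2 2
      + 2 * F 1 0 * F 1 1 * F 2 0 * F 2 1 * F 2 2
      + F 0 1 ^ 2 * F 2 1 ^ 2 * F 2 2 + F 1 1 ^ 2 * F 2 1 ^ 2 * F 2 2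

theorem fEfQuintic_diagonal_mul_mul_diagonal (F : Matrix (Fin 3) (Fin 3) α) (c : α) :
    fEfQuintic (diagonal ![c, c, 1] * F * diagonal ![c, c, 1]) = c ^ 6 * fEfQuintic F := by
  simp only [fEfQuintic, mul_diagonal, diagonal_mul, cons_val_zero, cons_val_one,
    cons_val_two, tail_cons, head_cons]
  ring

theorem fEfQuintic_eq_block (F : Matrix (Fin 3) (Fin 3) α) :
    fEfQuintic F =
      (F 0 2 ^ 2 + F 1 2 ^ 2 - (F 2 0 ^ 2 + F 2 1 ^ 2)) *
          ((F 0 0 * F 0 2 + F 1 0 * F 1 2) * F 2 0 + (F 0 1 * F 0 2 + F 1 1 * F 1 2) * F 2 1)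
        + F 2 2 * ((F 0 0 * F 2 0 + F 0 1 * F 2 1) ^ 2 + (F 1 0 * F 2 0 + F 1 1 * F 2 1) ^ 2
          - ((F 0 0 * F 0 2 + F 1 0 * F 1 2) ^ 2 + (F 0 1 * F 0 2 + F 1 1 * F 1 2) ^ 2)) := by
  unfold fEfQuintic
  ring

theorem fEfQuintic_eq_zero_of_transpose_mul_self (E : Matrix (Fin 3) (Fin 3) α)
    (s : Fin 3 → α) (hGram : Eᵀ * E = (s ⬝ᵥ s) • 1 - vecMulVec s s) (hs : E *ᵥ s = 0) :
    fEfQuintic E = 0 := by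
  have gram : ∀ i j, E 0 i * E 0 j + E 1 i * E 1 j + E 2 i * E 2 j
      = (s 0 * s 0 + s 1 * s 1 + s 2 * s 2) * (if i = j then 1 else 0) - s i * s j := by
    intro i j
    simpa [Matrix.mul_apply, Fin.sum_univ_three, one_apply, dotProduct, vecMulVec_apply]
      using congrFun (congrFun hGram i) j
  have kernel : E 2 0 * s 0 + E 2 1 * s 1 + E 2 2 * s 2 = 0 := by
    simpa [mulVec, dotProduct, Fin.sum_univ_three] using congrFun hs 2
  have h02 := gram 0 2
  have h12 := gram 1 2
  have h22 := gram 2 2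
  have h00 := gram 0 0
  have h01 := gram 0 1
  have h11 := gram 1 1
  simp only [if_pos, if_neg, Fin.reduceEq, mul_one, mul_zero, zero_sub, not_false_eq_true]
    at h02 h12 h22 h00 h01 h11
  have bilinear :
      (E 0 0 * E 0 2 + E 1 0 * E 1 2) * E 2 0 + (E 0 1 * E 0 2 + E 1 1 * E 1 2) * E 2 1
        = E 2 2 * (s 2 ^ 2 - (E 2 0 ^ 2 + E 2 1 ^ 2)) := by
    linear_combination E 2 0 * h02 + E 2 1 * h12 - s 2 * kernel
  have normTop : (E 0 0 * E 0 2 + E 1 0 * E 1 2) ^ 2 + (E 0 1 * E 0 2 + E 1 1 * E 1 2) ^ 2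
      = s 2 ^ 2 * (s 0 ^ 2 + s 1 ^ 2) - 2 * s 2 ^ 2 * E 2 2 ^ 2
        + E 2 2 ^ 2 * (E 2 0 ^ 2 + E 2 1 ^ 2) := by
    linear_combination (E 0 0 * E 0 2 + E 1 0 * E 1 2 - s 0 * s 2 - E 2 0 * E 2 2) * h02
      + (E 0 1 * E 0 2 + E 1 1 * E 1 2 - s 1 * s 2 - E 2 1 * E 2 2) * h12
      + 2 * s 2 * E 2 2 * kernel
  have normBottom : (E 0 0 * E 2 0 + E 0 1 * E 2 1) ^ 2 + (E 1 0 * E 2 0 + E 1 1 * E 2 1) ^ 2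
      = (s 0 ^ 2 + s 1 ^ 2 + s 2 ^ 2) * (E 2 0 ^ 2 + E 2 1 ^ 2) - s 2 ^ 2 * E 2 2 ^ 2
        - (E 2 0 ^ 2 + E 2 1 ^ 2) ^ 2 := by
    linear_combination E 2 0 ^ 2 * h00 + 2 * E 2 0 * E 2 1 * h01 + E 2 1 ^ 2 * h11
      - (E 2 0 * s 0 + E 2 1 * s 1 - E 2 2 * s 2) * kernel
  rw [fEfQuintic_eq_block, bilinear, normTop, normBottom]
  linear_combination E 2 2 * (s 2 ^ 2 - (E 2 0 ^ 2 + E 2 1 ^ 2)) * h22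

end Quintic

theorem dotProduct_transpose_mulVec_self {n 𝕜 : Type*} [Fintype n] [DecidableEq n] [CommRing 𝕜]
    {R : Matrix n n 𝕜} (hR : R * Rᵀ = 1) (t : n → 𝕜) : (Rᵀ *ᵥ t) ⬝ᵥ (Rᵀ *ᵥ t) = t ⬝ᵥ t := by
  rw [dotProduct_mulVec, vecMul_transpose, mulVec_mulVec, hR, one_mulVec]

theorem inv_focal_calibration {𝕜 : Type*} [Field 𝕜] {f : 𝕜} (hf : f ≠ 0) :
    (!![f, 0, 0; 0, f, 0; 0, 0, 1])⁻¹ = diagonal ![f⁻¹, f⁻¹, 1] := by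
  have hK : !![f, 0, 0; 0, f, 0; 0, 0, 1] = diagonal ![f, f, 1] := by
    ext i j; fin_cases i <;> fin_cases j <;> rfl
  rw [hK]
  refine inv_eq_left_inv ?_
  rw [diagonal_mul_diagonal, ← diagonal_one]
  congr 1
  ext i; fin_cases i <;> simp [hf]

section EssentialMatrix

variable (t : Fin 3 → ℝ) {R : Matrix (Fin 3) (Fin 3) ℝ}

theorem crossMat_transpose_mul_self :
    (crossMat t)ᵀ * crossMat t = (t ⬝ᵥ t) • 1 - vecMulVec t t := by
  ext i j
  fin_cases i <;> fin_cases j <;>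
    simp [crossMat, Matrix.mul_apply, Fin.sum_univ_three, dotProduct, vecMulVec_apply] <;> ring

theorem crossMat_mulVec_self : crossMat t *ᵥ t = 0 := by
  ext i
  fin_cases i <;> simp [crossMat, mulVec, dotProduct, Fin.sum_univ_three] <;> ring

theorem crossMat_mul_transpose_mul_self (hR : R * Rᵀ = 1) :
    (crossMat t * R)ᵀ * (crossMat t * R)
      = ((Rᵀ *ᵥ t) ⬝ᵥ (Rᵀ *ᵥ t)) • 1 - vecMulVec (Rᵀ *ᵥ t) (Rᵀ *ᵥ t) := by
  rw [transpose_mul, Matrix.mul_assoc, ← Matrix.mul_assoc (crossMat t)ᵀ,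
    crossMat_transpose_mul_self, dotProduct_transpose_mulVec_self hR, Matrix.sub_mul,
    Matrix.mul_sub, smul_mul, Matrix.one_mul, Matrix.mul_smul, mul_eq_one_comm.mp hR,
    vecMulVec_mul, mul_vecMulVec, ← mulVec_transpose]

theorem crossMat_mul_mulVec_transpose_mulVec (hR : R * Rᵀ = 1) :
    (crossMat t * R) *ᵥ (Rᵀ *ᵥ t) = 0 := by
  rw [← mulVec_mulVec, mulVec_mulVec t R, hR, one_mulVec, crossMat_mulVec_self]

theorem fEfQuintic_crossMat_mul (hR : R * Rᵀ = 1) : fEfQuintic (crossMat t * R) = 0 :=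
  fEfQuintic_eq_zero_of_transpose_mul_self _ _ (crossMat_mul_transpose_mul_self t hR)
    (crossMat_mul_mulVec_transpose_mulVec t hR)

end EssentialMatrix

theorem fEf_quintic_general (t : Fin 3 → ℝ) (R : Matrix (Fin 3) (Fin 3) ℝ)
    (hR : R * Rᵀ = 1) (E : Matrix (Fin 3) (Fin 3) ℝ)
    (hE : E = crossMat t * R) (f : ℝ) (hf : f ≠ 0)
    (K : Matrix (Fin 3) (Fin 3) ℝ) (hK : K = !![f, 0, 0; 0, f, 0; 0, 0, 1])
    (F : Matrix (Fin 3) (Fin 3) ℝ) (hF : F = K⁻¹ * E * K⁻¹) :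
    F 0 0 * F 0 2 ^ 3 * F 2 0 + F 0 2 ^ 2 * F 1 0 * F 1 2 * F 2 0
      + F 0 0 * F 0 2 * F 1 2 ^ 2 * F 2 0 + F 1 0 * F 1 2 ^ 3 * F 2 0
      - F 0 0 * F 0 2 * F 2 0 ^ 3 - F 1 0 * F 1 2 * F 2 0 ^ 3
      + F 0 1 * F 0 2 ^ 3 * F 2 1 + F 0 2 ^ 2 * F 1 1 * F 1 2 * F 2 1
      + F 0 1 * F 0 2 * F 1 2 ^ 2 * F 2 1 + F 1 1 * F 1 2 ^ 3 * F 2 1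
      - F 0 1 * F 0 2 * F 2 0 ^ 2 * F 2 1 - F 1 1 * F 1 2 * F 2 0 ^ 2 * F 2 1
      - F 0 0 * F 0 2 * F 2 0 * F 2 1 ^ 2 - F 1 0 * F 1 2 * F 2 0 * F 2 1 ^ 2
      - F 0 1 * F 0 2 * F 2 1 ^ 3 - F 1 1 * F 1 2 * F 2 1 ^ 3
      - F 0 0 ^ 2 * F 0 2 ^ 2 * F 2 2
      - 2 * F 0 0 * F 0 2 * F 1 0 * F 1 2 * F 2 2
      - 2 * F 0 1 * F 0 2 * F 1 1 * F 1 2 * F 2 2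
      - F 0 1 ^ 2 * F 0 2 ^ 2 * F 2 2
      - F 1 0 ^ 2 * F 1 2 ^ 2 * F 2 2 - F 1 1 ^ 2 * F 1 2 ^ 2 * F 2 2
      + F 0 0 ^ 2 * F 2 0 ^ 2 * F 2 2 + F 1 0 ^ 2 * F 2 0 ^ 2 * F 2 2
      + 2 * F 0 0 * F 0 1 * F 2 0 * F 2 1 * F 2 2
      + 2 * F 1 0 * F 1 1 * F 2 0 * F 2 1 * F 2 2
      + F 0 1 ^ 2 * F 2 1 ^ 2 * F 2 2 + F 1 1 ^ 2 * F 2 1 ^ 2 * F 2 2 = 0 := by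
  have hFE : F = diagonal ![f⁻¹, f⁻¹, 1] * E * diagonal ![f⁻¹, f⁻¹, 1] := by
    rw [hF, hK, inv_focal_calibration hf]
  have hscale := fEfQuintic_diagonal_mul_mul_diagonal E f⁻¹
  rw [← hFE, hE, fEfQuintic_crossMat_mul t hR, mul_zero] at hscale
  exact hscale

/-- The fundamental matrix `F = K⁻¹ E K⁻¹` of a pair of cameras with a common
focal length `f` satisfies the quintic constraint of the f+E+f elimination
ideal. -/
theorem fEf_quintic (t : Fin 3 → ℝ) (R : Matrix (Fin 3) (Fin 3) ℝ)
    (hR : R * Rᵀ = 1) (hdet : R.det = 1) (E : Matrix (Fin 3) (Fin 3) ℝ)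
    (hE : E = crossMat t * R) (f : ℝ) (hf : f ≠ 0)
    (K : Matrix (Fin 3) (Fin 3) ℝ) (hK : K = !![f, 0, 0; 0, f, 0; 0, 0, 1])
    (F : Matrix (Fin 3) (Fin 3) ℝ) (hF : F = K⁻¹ * E * K⁻¹) :
    F 0 0 * F 0 2 ^ 3 * F 2 0 + F 0 2 ^ 2 * F 1 0 * F 1 2 * F 2 0
      + F 0 0 * F 0 2 * F 1 2 ^ 2 * F 2 0 + F 1 0 * F 1 2 ^ 3 * F 2 0
      - F 0 0 * F 0 2 * F 2 0 ^ 3 - F 1 0 * F 1 2 * F 2 0 ^ 3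
      + F 0 1 * F 0 2 ^ 3 * F 2 1 + F 0 2 ^ 2 * F 1 1 * F 1 2 * F 2 1
      + F 0 1 * F 0 2 * F 1 2 ^ 2 * F 2 1 + F 1 1 * F 1 2 ^ 3 * F 2 1
      - F 0 1 * F 0 2 * F 2 0 ^ 2 * F 2 1 - F 1 1 * F 1 2 * F 2 0 ^ 2 * F 2 1
      - F 0 0 * F 0 2 * F 2 0 * F 2 1 ^ 2 - F 1 0 * F 1 2 * F 2 0 * F 2 1 ^ 2
      - F 0 1 * F 0 2 * F 2 1 ^ 3 - F 1 1 * F 1 2 * F 2 1 ^ 3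
      - F 0 0 ^ 2 * F 0 2 ^ 2 * F 2 2
      - 2 * F 0 0 * F 0 2 * F 1 0 * F 1 2 * F 2 2
      - 2 * F 0 1 * F 0 2 * F 1 1 * F 1 2 * F 2 2
      - F 0 1 ^ 2 * F 0 2 ^ 2 * F 2 2
      - F 1 0 ^ 2 * F 1 2 ^ 2 * F 2 2 - F 1 1 ^ 2 * F 1 2 ^ 2 * F 2 2
      + F 0 0 ^ 2 * F 2 0 ^ 2 * F 2 2 + F 1 0 ^ 2 * F 2 0 ^ 2 * F 2 2
      + 2 * F 0 0 * F 0 1 * F 2 0 * F 2 1 * F 2 2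
      + 2 * F 1 0 * F 1 1 * F 2 0 * F 2 1 * F 2 2
      + F 0 1 ^ 2 * F 2 1 ^ 2 * F 2 2 + F 1 1 ^ 2 * F 2 1 ^ 2 * F 2 2 = 0 :=
  fEf_quintic_general t R hR E hE f hf K hK F hF
end

section
/- Let F be a real 3×3 matrix with entries f_{ij} and f ∈ ℝ, f ≠ 0, such that E = diag(f,f,1)·F·diag(f,f,1) is an essential matrix. Assume D = f₁₁f₁₃f₃₁f₃₂ + f₂₁f₂₃f₃₁f₃₂ + f₁₂f₁₃f₃₂² + f₂₂f₂₃f₃₂² − f₁₁f₁₂f₃₁f₃₃ − f₂₁f₂₂f₃₁f₃₃ − f₁₂²f₃₂f₃₃ − f₂₂²f₃₂f₃₃ ≠ 0. Then f² = (−f₁₃²f₃₂f₃₃ − f₂₃²f₃₂f₃₃ + f₁₂f₁₃f₃₃² + f₂₂f₂₃f₃₃²) / D. -/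
open Matrix

set_option maxHeartbeats 4000000 in
/-- Closed-form focal-length extraction for the f+E+f problem. -/
theorem fEf_focal_formula (F : Matrix (Fin 3) (Fin 3) ℝ) (f : ℝ) (hf : f ≠ 0)
    (K : Matrix (Fin 3) (Fin 3) ℝ) (hK : K = !![f, 0, 0; 0, f, 0; 0, 0, 1])
    (t : Fin 3 → ℝ) (R : Matrix (Fin 3) (Fin 3) ℝ)
    (hR : R * Rᵀ = 1) (hdet : R.det = 1)
    (hE : K * F * K = crossMat t * R)
    (D : ℝ)
    (hD : D = F 0 0 * F 0 2 * F 2 0 * F 2 1 + F 1 0 * F 1 2 * F 2 0 * F 2 1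
      + F 0 1 * F 0 2 * F 2 1 ^ 2 + F 1 1 * F 1 2 * F 2 1 ^ 2
      - F 0 0 * F 0 1 * F 2 0 * F 2 2 - F 1 0 * F 1 1 * F 2 0 * F 2 2
      - F 0 1 ^ 2 * F 2 1 * F 2 2 - F 1 1 ^ 2 * F 2 1 * F 2 2)
    (hDne : D ≠ 0) :
    f ^ 2 = (-(F 0 2 ^ 2 * F 2 1 * F 2 2) - F 1 2 ^ 2 * F 2 1 * F 2 2
      + F 0 1 * F 0 2 * F 2 2 ^ 2 + F 1 1 * F 1 2 * F 2 2 ^ 2) / D := by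
  have hM : K * F * K = !![f^2*F 0 0, f^2*F 0 1, f*F 0 2;
      f^2*F 1 0, f^2*F 1 1, f*F 1 2; f*F 2 0, f*F 2 1, F 2 2] := by
    subst hK
    ext i j
    fin_cases i <;> fin_cases j <;>
      simp [Matrix.mul_apply, Fin.sum_univ_three, Matrix.vecMul, dotProduct,
        Matrix.vecHead, Matrix.vecTail] <;> ring
  set M : Matrix (Fin 3) (Fin 3) ℝ := !![f^2*F 0 0, f^2*F 0 1, f*F 0 2;
      f^2*F 1 0, f^2*F 1 1, f*F 1 2; f*F 2 0, f*F 2 1, F 2 2] with hMdef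
  rw [hM] at hE
  have hEEt : M * Mᵀ = crossMat t * (crossMat t)ᵀ := by
    rw [hE, Matrix.transpose_mul, Matrix.mul_assoc, ← Matrix.mul_assoc R, hR,
      Matrix.one_mul]
  have hT : (crossMat t)ᵀ = -crossMat t := by
    ext i j
    fin_cases i <;> fin_cases j <;> simp [crossMat]
  have hCCC : crossMat t * (crossMat t)ᵀ * crossMat t
      = ((Matrix.trace (crossMat t * (crossMat t)ᵀ))/2) • crossMat t := by
    rw [hT]
    ext i j
    fin_cases i <;> fin_cases j <;>
      simp [crossMat, Matrix.mul_apply, Matrix.neg_apply, Matrix.trace,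
        Matrix.diag, Fin.sum_univ_three] <;> ring
  have hid : M * Mᵀ * M = ((Matrix.trace (M * Mᵀ))/2) • M := by
    rw [hEEt, hE, ← Matrix.mul_assoc, hCCC, Matrix.smul_mul]
  set Mt : Matrix (Fin 3) (Fin 3) ℝ := !![f^2*F 0 0, f^2*F 1 0, f*F 2 0;
      f^2*F 0 1, f^2*F 1 1, f*F 2 1; f*F 0 2, f*F 1 2, F 2 2] with hMtdef
  have hMT : Mᵀ = Mt := by
    rw [hMdef, hMtdef]
    ext i j
    fin_cases i <;> fin_cases j <;> simp [Matrix.transpose_apply]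
  rw [hMT] at hid
  have h21 : (M * Mt * M) 2 1 = ((Matrix.trace (M * Mt))/2) * M 2 1 := by
    rw [hid]; simp
  have h22 : (M * Mt * M) 2 2 = ((Matrix.trace (M * Mt))/2) * M 2 2 := by
    rw [hid]; simp
  simp [hMdef, hMtdef, Matrix.mul_apply, Matrix.trace,
    Matrix.diag_apply, Fin.sum_univ_three] at h21 h22
  have hkey : f^3 * (f^2 * D -
      (-(F 0 2 ^ 2 * F 2 1 * F 2 2) - F 1 2 ^ 2 * F 2 1 * F 2 2
      + F 0 1 * F 0 2 * F 2 2 ^ 2 + F 1 1 * F 1 2 * F 2 2 ^ 2)) = 0 := by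
    subst hD
    linear_combination (-(F 2 2)) * h21 + (f * F 2 1) * h22
  have h0 : f^2 * D -
      (-(F 0 2 ^ 2 * F 2 1 * F 2 2) - F 1 2 ^ 2 * F 2 1 * F 2 2
      + F 0 1 * F 0 2 * F 2 2 ^ 2 + F 1 1 * F 1 2 * F 2 2 ^ 2) = 0 := by
    rcases mul_eq_zero.mp hkey with h | h
    · exact absurd h (pow_ne_zero 3 hf)
    · exact h
  field_simp
  linarith [h0]
end

section
/- Let I ⊆ ℂ[x₁,…,xₙ] be an ideal and let G be a Gröbner basis of I with respect to the lexicographic monomial order with x₁ > x₂ > ⋯ > xₙ. Then for every 0 ≤ l ≤ n, the set G_l = G ∩ ℂ[x_{l+1},…,xₙ] is a Gröbner basis of the l-th elimination ideal I_l = I ∩ ℂ[x_{l+1},…,xₙ]. -/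
open MvPolynomial

/-- `m` is the leading (maximal) monomial exponent of `p` with respect to the
lexicographic order on monomials with `x₀ > x₁ > ⋯`. -/
def IsLeadMon {n : ℕ} (p : MvPolynomial (Fin n) ℂ) (m : Fin n →₀ ℕ) : Prop :=
  m ∈ p.support ∧ ∀ m' ∈ p.support, toLex m' ≤ toLex m

/-- `G` is a Gröbner basis (w.r.t. the lex order with `x₀ > x₁ > ⋯`) of the set
of polynomials `S`: `G ⊆ S`, and the lex-leading monomial of every nonzero
`p ∈ S` is divisible by the lex-leading monomial of some nonzero `g ∈ G`. -/
def IsGroebnerOf {n : ℕ} (G : Set (MvPolynomial (Fin n) ℂ))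
    (S : Set (MvPolynomial (Fin n) ℂ)) : Prop :=
  G ⊆ S ∧
  ∀ p ∈ S, p ≠ 0 → ∀ m, IsLeadMon p m →
    ∃ g ∈ G, g ≠ 0 ∧ ∃ mg, IsLeadMon g mg ∧ mg ≤ m

/-- `p` lies in the subring `ℂ[x_{l},…,x_{n-1}]`, i.e. uses only the variables
with index `≥ l`. -/
def OnlyLastVars {n : ℕ} (l : ℕ) (p : MvPolynomial (Fin n) ℂ) : Prop :=
  ∀ m ∈ p.support, ∀ j : Fin n, m j ≠ 0 → l ≤ (j : ℕ)

/-- If `a ≤ b` lexicographically and `b` vanishes on all indices `< l`,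
then so does `a`. -/
lemma lex_le_vanish {n l : ℕ} {a b : Fin n →₀ ℕ}
    (h : toLex a ≤ toLex b) (hb : ∀ j : Fin n, (j : ℕ) < l → b j = 0)
    (j : Fin n) (hj : (j : ℕ) < l) : a j = 0 := by
  rcases h.lt_or_eq with hlt | heq
  · obtain ⟨i, hpre, hi⟩ := hlt
    have hi' : a i < b i := hi
    have hpre' : ∀ d, d < i → a d = b d := hpre
    -- `hi : a i < b i`, `hpre : ∀ d < i, a d = b d`
    by_contra ha
    -- j is an index where a j ≠ 0 = b j, so j ≥ i; but then consider cases
    have hbj : b j = 0 := hb j hj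
    rcases lt_trichotomy j i with hji | hji | hji
    · exact ha ((hpre' j hji).trans hbj)
    · subst hji
      have hbj' : b j = 0 := hb j hj
      rw [hbj'] at hi'
      omega
    · -- i < j < l in Fin order? i < j means i.val < j.val ≤ l, so b i = 0
      have hbi : b i = 0 := hb i (lt_trans (Fin.lt_iff_val_lt_val.mp hji) hj)
      rw [hbi] at hi'
      omega
  · have : a = b := by
      apply Finsupp.ext; intro k
      exact congrFun (congrArg _ heq) k
    rw [this]; exact hb j hj

/-- **Elimination Theorem.** If `G` is a lex Gröbner basis of the ideal `I`,
then for every `0 ≤ l ≤ n`, `G_l = G ∩ ℂ[x_{l},…,x_{n-1}]` is a Gröbner basis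
of the elimination ideal `I_l = I ∩ ℂ[x_{l},…,x_{n-1}]`. -/
theorem elimination_theorem {n : ℕ} (I : Ideal (MvPolynomial (Fin n) ℂ))
    (G : Set (MvPolynomial (Fin n) ℂ)) (hG : IsGroebnerOf G I)
    (l : ℕ) (hl : l ≤ n) :
    IsGroebnerOf {g ∈ G | OnlyLastVars l g} {p | p ∈ I ∧ OnlyLastVars l p} := by
  obtain ⟨hsub, hdiv⟩ := hG
  constructor
  · rintro g ⟨hgG, hgv⟩
    exact ⟨hsub hgG, hgv⟩
  · rintro p ⟨hpI, hpv⟩ hp0 m hm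
    obtain ⟨g, hgG, hg0, mg, hmg, hle⟩ := hdiv p hpI hp0 m hm
    have hmz : ∀ j : Fin n, (j : ℕ) < l → m j = 0 := by
      intro j hj
      by_contra h
      exact absurd (hpv m hm.1 j h) (by omega)
    have hmgz : ∀ j : Fin n, (j : ℕ) < l → mg j = 0 := by
      intro j hj
      have := hle j
      have := hmz j hj
      omega
    refine ⟨g, ⟨hgG, ?_⟩, hg0, mg, hmg, hle⟩
    intro m' hm' j hj
    by_contra h
    have hjl : (j : ℕ) < l := by omega
    exact hj (lex_le_vanish (hmg.2 m' hm') hmgz j hjl)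
end
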